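/- arXiv:2511.00725 — 3 statements merged into one kernel-verified Lean document; each statement's English description precedes it below -/
import Mathlib

section
/- Let S ⊆ ℝ³ be an open set, x₀ ∈ ℝ³, r > 0 and δ ∈ (0,1). If S is 3D δ-sparse around x₀ at scale r, i.e. the Lebesgue measure of S ∩ B_r(x₀) is at most δ · (4/3)πr³, then S is 1D δ^{1/3}-sparse around x₀ at scale r, i.e. there exists a unit vector ν ∈ ℝ³ such that the one-dimensional Lebesgue measure of {t ∈ (−r, r) : x₀ + tν ∈ S} is at most δ^{1/3} · 2r. -/
open MeasureTheory Set Metric Pointwise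
open scoped ENNReal

section Aux

lemma lintegral_sq_lower (B : Set ℝ) (hB : MeasurableSet B) (hB0 : B ⊆ Ioi 0)
    (hBfin : volume B ≠ ⊤) :
    ENNReal.ofReal (((volume B).toReal) ^ 3 / 3) ≤ ∫⁻ t in B, ENNReal.ofReal (t ^ 2) := by
  set a : ℝ := (volume B).toReal with ha
  have ha0 : 0 ≤ a := ENNReal.toReal_nonneg
  have hvb : volume B = ENNReal.ofReal a := (ENNReal.ofReal_toReal hBfin).symm
  set I : Set ℝ := Ioo 0 a with hI
  have hImeas : MeasurableSet I := measurableSet_Ioo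
  have hvI : volume I = ENNReal.ofReal a := by simp [hI]
  have hIint : ∫⁻ t in I, ENNReal.ofReal (t ^ 2) = ENNReal.ofReal (a ^ 3 / 3) := by
    rw [← ofReal_integral_eq_lintegral_ofReal]
    · rw [show ∫ t in I, t ^ 2 = ∫ t in (0:ℝ)..a, t ^ 2 by
        rw [intervalIntegral.integral_of_le ha0, integral_Ioc_eq_integral_Ioo]]
      rw [integral_pow]
      norm_num
    · exact (continuous_pow 2).continuousOn.integrableOn_compact isCompact_Icc
        |>.mono_set Ioo_subset_Icc_self
    · filter_upwards [ae_restrict_mem hImeas] with t ht using sq_nonneg t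
  have hsplitB : ∫⁻ t in B, ENNReal.ofReal (t ^ 2)
      = (∫⁻ t in B ∩ I, ENNReal.ofReal (t ^ 2)) + ∫⁻ t in B \ I, ENNReal.ofReal (t ^ 2) := by
    rw [← lintegral_union (hB.diff hImeas) (disjoint_sdiff_right.mono_left inter_subset_right),
      inter_union_diff]
  have hsplitI : ∫⁻ t in I, ENNReal.ofReal (t ^ 2)
      = (∫⁻ t in I ∩ B, ENNReal.ofReal (t ^ 2)) + ∫⁻ t in I \ B, ENNReal.ofReal (t ^ 2) := by
    rw [← lintegral_union (hImeas.diff hB) (disjoint_sdiff_right.mono_left inter_subset_right),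
      inter_union_diff]
  have hBI : volume (B ∩ I) ≠ ⊤ := ne_top_of_le_ne_top hBfin (measure_mono inter_subset_left)
  have hmeq : volume (B \ I) = volume (I \ B) := by
    have h1 : volume (B \ I) = ENNReal.ofReal a - volume (B ∩ I) := by
      rw [← Set.diff_self_inter, measure_diff inter_subset_left
        (hB.inter hImeas).nullMeasurableSet hBI, hvb]
    have h2 : volume (I \ B) = ENNReal.ofReal a - volume (B ∩ I) := by
      rw [← Set.diff_self_inter, measure_diff inter_subset_left
        (hImeas.inter hB).nullMeasurableSet (by rwa [inter_comm] at hBI), hvI, inter_comm]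
    rw [h1, h2]
  have hlow : ENNReal.ofReal (a ^ 2) * volume (B \ I) ≤ ∫⁻ t in B \ I, ENNReal.ofReal (t ^ 2) := by
    rw [← setLIntegral_const]
    refine setLIntegral_mono' (hB.diff hImeas) fun t ht => ?_
    have ht0 : 0 < t := hB0 ht.1
    have hta : a ≤ t := by
      by_contra hlt
      exact ht.2 ⟨ht0, lt_of_not_ge hlt⟩
    exact ENNReal.ofReal_le_ofReal (by nlinarith)
  have hup : ∫⁻ t in I \ B, ENNReal.ofReal (t ^ 2) ≤ ENNReal.ofReal (a ^ 2) * volume (I \ B) := by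
    rw [← setLIntegral_const]
    refine setLIntegral_mono' (hImeas.diff hB) fun t ht => ?_
    exact ENNReal.ofReal_le_ofReal (by nlinarith [ht.1.1, ht.1.2])
  calc ENNReal.ofReal (a ^ 3 / 3) = ∫⁻ t in I, ENNReal.ofReal (t ^ 2) := hIint.symm
    _ = (∫⁻ t in I ∩ B, ENNReal.ofReal (t ^ 2)) + ∫⁻ t in I \ B, ENNReal.ofReal (t ^ 2) := hsplitI
    _ ≤ (∫⁻ t in B ∩ I, ENNReal.ofReal (t ^ 2)) + ENNReal.ofReal (a ^ 2) * volume (I \ B) := by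
        rw [inter_comm]; exact add_le_add le_rfl hup
    _ = (∫⁻ t in B ∩ I, ENNReal.ofReal (t ^ 2)) + ENNReal.ofReal (a ^ 2) * volume (B \ I) := by
        rw [hmeq]
    _ ≤ (∫⁻ t in B ∩ I, ENNReal.ofReal (t ^ 2)) + ∫⁻ t in B \ I, ENNReal.ofReal (t ^ 2) :=
        add_le_add le_rfl hlow
    _ = ∫⁻ t in B, ENNReal.ofReal (t ^ 2) := hsplitB.symm

variable {E : Type*} [NormedAddCommGroup E] [NormedSpace ℝ E] [MeasurableSpace E]
  [BorelSpace E] [FiniteDimensional ℝ E] [Nontrivial E]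

noncomputable def negSphere : sphere (0 : E) 1 → sphere (0 : E) 1 :=
  fun ν => ⟨-ν.1, by simpa using ν.2⟩

lemma continuous_negSphere : Continuous (negSphere (E := E)) :=
  Continuous.subtype_mk (continuous_neg.comp continuous_subtype_val) _

lemma negSphere_invol (ν : sphere (0 : E) 1) : negSphere (negSphere ν) = ν := by
  simp [negSphere]

lemma map_negSphere_toSphere (μ : Measure E) [μ.IsAddHaarMeasure] :
    Measure.map negSphere μ.toSphere = μ.toSphere := by
  refine Measure.ext fun s hs => ?_
  rw [Measure.map_apply continuous_negSphere.measurable hs]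
  have hpre : MeasurableSet (negSphere ⁻¹' s) := continuous_negSphere.measurable hs
  rw [Measure.toSphere_apply' _ hpre, Measure.toSphere_apply' _ hs]
  congr 1
  have himg : (Subtype.val '' (negSphere ⁻¹' s) : Set E) = -(Subtype.val '' s) := by
    ext v
    constructor
    · rintro ⟨ν, hν, rfl⟩
      exact ⟨negSphere ν, hν, by simp [negSphere]⟩
    · rintro ⟨ν, hν, hv⟩
      refine ⟨negSphere ν, by simpa [negSphere_invol] using hν, ?_⟩
      simp [negSphere]
      rw [hv, neg_neg]
  rw [himg]
  have hsm : (Ioo (0:ℝ) 1 • -(Subtype.val '' s) : Set E) = -(Ioo (0:ℝ) 1 • (Subtype.val '' s)) := by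
    ext v
    simp only [Set.mem_smul, Set.mem_neg]
    constructor
    · rintro ⟨a, ha, b, hb, rfl⟩
      exact ⟨a, ha, -b, hb, by simp⟩
    · rintro ⟨a, ha, b, hb, hab⟩
      exact ⟨a, ha, -b, by simpa using hb, by rw [smul_neg, hab, neg_neg]⟩
  rw [hsm]
  exact Measure.measure_neg μ _

lemma volume_eq_polar (μ : Measure E) [μ.IsAddHaarMeasure] (U : Set E) (hU : MeasurableSet U) :
    μ U = ∫⁻ ν : sphere (0 : E) 1,
      Measure.volumeIoiPow (Module.finrank ℝ E - 1) {t : Ioi (0:ℝ) | (t : ℝ) • (ν : E) ∈ U}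
      ∂μ.toSphere := by
  set ρ := Measure.volumeIoiPow (Module.finrank ℝ E - 1)
  set A : Set (sphere (0:E) 1 × Ioi (0:ℝ)) := {p | (p.2 : ℝ) • (p.1 : E) ∈ U} with hA
  have hAmeas : MeasurableSet A := by
    have hcont : Continuous fun p : sphere (0:E) 1 × Ioi (0:ℝ) => (p.2 : ℝ) • (p.1 : E) := by
      fun_prop
    exact hcont.measurable hU
  have h1 : μ U = (μ.comap (Subtype.val : ({0}ᶜ : Set E) → E)) (Subtype.val ⁻¹' U) := by
    rw [comap_subtype_coe_apply (measurableSet_singleton (0:E)).compl,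
      Set.image_preimage_eq_inter_range, Subtype.range_coe]
    rw [show U ∩ ({0}ᶜ : Set E) = U \ {0} by rfl]
    rw [measure_diff_null (measure_singleton _)]
  have hpre : (homeomorphUnitSphereProd E) ⁻¹' A = Subtype.val ⁻¹' U := by
    ext v
    simp only [Set.mem_preimage, hA, Set.mem_setOf_eq]
    have : ((homeomorphUnitSphereProd E v).2 : ℝ) • ((homeomorphUnitSphereProd E v).1 : E)
        = (v : E) := by
      simp [homeomorphUnitSphereProd_apply_fst_coe, homeomorphUnitSphereProd_apply_snd_coe,
        smul_smul, mul_inv_cancel₀ (norm_ne_zero_iff.2 v.2)]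
    rw [this]
  have h2 := (μ.measurePreserving_homeomorphUnitSphereProd).measure_preimage
    hAmeas.nullMeasurableSet
  rw [hpre] at h2
  rw [h1, h2, Measure.prod_apply hAmeas]
  rfl

lemma volume_unit_ball_three :
    volume (ball (0 : EuclideanSpace ℝ (Fin 3)) 1) = ENNReal.ofReal (4/3 * Real.pi) := by
  rw [EuclideanSpace.volume_ball]
  have h1 : Real.Gamma ((Fintype.card (Fin 3) : ℝ) / 2 + 1) = 3/4 * Real.sqrt Real.pi := by
    have h : ((Fintype.card (Fin 3) : ℝ) / 2 + 1) = (1/2 + 1) + 1 := by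
      simp [Fintype.card_fin]; ring
    rw [h, Real.Gamma_add_one (by positivity), Real.Gamma_add_one (by positivity),
      Real.Gamma_one_half_eq]
    ring
  rw [h1]
  have hsp : Real.sqrt Real.pi > 0 := Real.sqrt_pos.2 Real.pi_pos
  have h2 : Real.sqrt Real.pi ^ Fintype.card (Fin 3) / (3/4 * Real.sqrt Real.pi)
      = 4/3 * Real.pi := by
    rw [Fintype.card_fin]
    rw [show Real.sqrt Real.pi ^ 3 = Real.pi * Real.sqrt Real.pi by
      rw [pow_succ, Real.sq_sqrt Real.pi_pos.le]]
    field_simp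
  rw [h2]
  simp

end Aux

/-- **3D sparseness implies 1D sparseness.** If an open set `S ⊆ ℝ³` is 3D `δ`-sparse around `x₀`
at scale `r` (i.e. `|S ∩ B_r(x₀)| ≤ δ · (4/3)πr³`), then it is 1D `δ^{1/3}`-sparse around `x₀`
at scale `r`: there is a unit vector `ν` with the one-dimensional Lebesgue measure of
`{t ∈ (−r,r) : x₀ + tν ∈ S}` at most `δ^{1/3} · 2r`. -/
theorem sparse3D_implies_sparse1D
    (S : Set (EuclideanSpace ℝ (Fin 3))) (hS : IsOpen S)
    (x₀ : EuclideanSpace ℝ (Fin 3)) (r δ : ℝ)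
    (hr : 0 < r) (hδ0 : 0 < δ) (hδ1 : δ < 1)
    (hsparse3 : volume (S ∩ Metric.ball x₀ r) ≤
      ENNReal.ofReal (δ * ((4 / 3) * Real.pi * r ^ 3))) :
    ∃ ν : EuclideanSpace ℝ (Fin 3), ‖ν‖ = 1 ∧
      volume {t : ℝ | t ∈ Set.Ioo (-r) r ∧ x₀ + t • ν ∈ S} ≤
        ENNReal.ofReal (δ ^ ((1 : ℝ) / 3) * (2 * r)) := by
  by_contra hcon
  push_neg at hcon
  set c : ℝ := δ ^ ((1 : ℝ) / 3) * (2 * r) with hc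
  have hδ13 : 0 < δ ^ ((1:ℝ)/3) := Real.rpow_pos_of_pos hδ0 _
  have hc0 : 0 < c := by positivity
  have hc3 : c ^ 3 = δ * (8 * r ^ 3) := by
    have h13 : (δ ^ ((1:ℝ)/3)) ^ (3:ℕ) = δ := by
      rw [← Real.rpow_natCast (δ ^ ((1:ℝ)/3)) 3, ← Real.rpow_mul hδ0.le]
      norm_num
    rw [hc, mul_pow, h13]; ring
  -- the translated set
  set U : Set (EuclideanSpace ℝ (Fin 3)) :=
    ((fun v => x₀ + v) ⁻¹' S) ∩ ball (0 : EuclideanSpace ℝ (Fin 3)) r with hU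
  have hcont1 : Continuous fun v : EuclideanSpace ℝ (Fin 3) => x₀ + v := by fun_prop
  have hUopen : IsOpen U := (hS.preimage hcont1).inter isOpen_ball
  have hUmeas : MeasurableSet U := hUopen.measurableSet
  have hUvol : volume U = volume (S ∩ ball x₀ r) := by
    have hUeq : U = (fun v => x₀ + v) ⁻¹' (S ∩ ball x₀ r) := by
      ext v
      simp only [hU, Set.mem_inter_iff, Set.mem_preimage, mem_ball, dist_eq_norm]
      constructor
      · rintro ⟨h1, h2⟩; exact ⟨h1, by simpa using h2⟩
      · rintro ⟨h1, h2⟩; exact ⟨h1, by simpa using h2⟩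
    rw [hUeq, measure_preimage_add]
  -- the 1D sets along rays
  have key : ∀ w : EuclideanSpace ℝ (Fin 3), ‖w‖ = 1 →
      MeasurableSet {t : ℝ | t ∈ Ioo 0 r ∧ x₀ + t • w ∈ S} ∧
      volume {t : ℝ | t ∈ Ioo 0 r ∧ x₀ + t • w ∈ S} ≠ ⊤ := by
    intro w hw
    have hcw : Continuous fun t : ℝ => x₀ + t • w := by fun_prop
    have hmeas : MeasurableSet {t : ℝ | t ∈ Ioo 0 r ∧ x₀ + t • w ∈ S} := by
      have heq : {t : ℝ | t ∈ Ioo 0 r ∧ x₀ + t • w ∈ S}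
          = Ioo 0 r ∩ ((fun t : ℝ => x₀ + t • w) ⁻¹' S) := rfl
      rw [heq]
      exact measurableSet_Ioo.inter ((hS.preimage hcw).measurableSet)
    refine ⟨hmeas, ?_⟩
    refine ne_top_of_le_ne_top ?_ (measure_mono (fun t ht => ht.1 : _ ⊆ Ioo 0 r))
    simp [Real.volume_Ioo]
  -- polar decomposition
  have htot : volume U = ∫⁻ ν : sphere (0 : EuclideanSpace ℝ (Fin 3)) 1,
      Measure.volumeIoiPow (Module.finrank ℝ (EuclideanSpace ℝ (Fin 3)) - 1)
        {t : Ioi (0:ℝ) | (t : ℝ) • (ν : EuclideanSpace ℝ (Fin 3)) ∈ U}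
      ∂(volume : Measure (EuclideanSpace ℝ (Fin 3))).toSphere :=
    volume_eq_polar volume U hUmeas
  have hfr : Module.finrank ℝ (EuclideanSpace ℝ (Fin 3)) - 1 = 2 := by
    simp [finrank_euclideanSpace]
  rw [hfr] at htot
  -- the value of the ray measure
  have hval : ∀ ν : sphere (0 : EuclideanSpace ℝ (Fin 3)) 1,
      Measure.volumeIoiPow 2 {t : Ioi (0:ℝ) | (t : ℝ) • (ν : EuclideanSpace ℝ (Fin 3)) ∈ U}
      = ∫⁻ t in {t : ℝ | t ∈ Ioo 0 r ∧ x₀ + t • (ν : EuclideanSpace ℝ (Fin 3)) ∈ S},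
          ENNReal.ofReal (t ^ 2) := by
    intro ν
    have hw : ‖(ν : EuclideanSpace ℝ (Fin 3))‖ = 1 := by
      have h := ν.2
      rwa [mem_sphere_zero_iff_norm] at h
    have hsmeas : MeasurableSet
        {t : Ioi (0:ℝ) | (t : ℝ) • (ν : EuclideanSpace ℝ (Fin 3)) ∈ U} := by
      have hcont : Continuous fun t : Ioi (0:ℝ) =>
        (t : ℝ) • (ν : EuclideanSpace ℝ (Fin 3)) := by fun_prop
      exact hcont.measurable hUmeas
    have himg : (Subtype.val ''
          {t : Ioi (0:ℝ) | (t : ℝ) • (ν : EuclideanSpace ℝ (Fin 3)) ∈ U} : Set ℝ)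
        = {t : ℝ | t ∈ Ioo 0 r ∧ x₀ + t • (ν : EuclideanSpace ℝ (Fin 3)) ∈ S} := by
      ext t
      constructor
      · rintro ⟨⟨t', ht'⟩, hmem, rfl⟩
        simp only [Set.mem_setOf_eq, hU, Set.mem_inter_iff, Set.mem_preimage,
          mem_ball_zero_iff] at hmem
        have hnorm : ‖t' • (ν : EuclideanSpace ℝ (Fin 3))‖ = t' := by
          rw [norm_smul, hw, mul_one, Real.norm_eq_abs, abs_of_pos ht']
        exact ⟨⟨ht', by rw [hnorm] at hmem; exact hmem.2⟩, hmem.1⟩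
      · rintro ⟨⟨ht0, htr⟩, hmem⟩
        refine ⟨⟨t, ht0⟩, ?_, rfl⟩
        simp only [Set.mem_setOf_eq, hU, Set.mem_inter_iff, Set.mem_preimage,
          mem_ball_zero_iff]
        refine ⟨hmem, ?_⟩
        rw [norm_smul, hw, mul_one, Real.norm_eq_abs, abs_of_pos ht0]
        exact htr
    rw [Measure.volumeIoiPow, withDensity_apply _ hsmeas,
      setLIntegral_subtype measurableSet_Ioi _ (fun t : ℝ => ENNReal.ofReal (t ^ 2)), himg]
  -- per-direction strict lower bound
  set K : ℝ≥0∞ := ENNReal.ofReal (c ^ 3 / 12) with hK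
  set g : sphere (0 : EuclideanSpace ℝ (Fin 3)) 1 → ℝ≥0∞ := fun ν =>
    Measure.volumeIoiPow 2 {t : Ioi (0:ℝ) | (t : ℝ) • (ν : EuclideanSpace ℝ (Fin 3)) ∈ U}
    with hg
  have hstrict : ∀ ν : sphere (0 : EuclideanSpace ℝ (Fin 3)) 1,
      K < g ν + g (negSphere ν) := by
    intro ν
    have hw : ‖(ν : EuclideanSpace ℝ (Fin 3))‖ = 1 := by
      have h := ν.2
      rwa [mem_sphere_zero_iff_norm] at h
    have hwn : ‖(-(ν : EuclideanSpace ℝ (Fin 3)))‖ = 1 := by rw [norm_neg]; exact hw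
    obtain ⟨hA₁m, hA₁f⟩ := key _ hw
    obtain ⟨hA₂m, hA₂f⟩ := key _ hwn
    set a : ℝ := (volume {t : ℝ | t ∈ Ioo 0 r ∧
      x₀ + t • (ν : EuclideanSpace ℝ (Fin 3)) ∈ S}).toReal with ha
    set b : ℝ := (volume {t : ℝ | t ∈ Ioo 0 r ∧
      x₀ + t • (-(ν : EuclideanSpace ℝ (Fin 3))) ∈ S}).toReal with hb
    have ha0 : 0 ≤ a := ENNReal.toReal_nonneg
    have hb0 : 0 ≤ b := ENNReal.toReal_nonneg
    have hcover : {t : ℝ | t ∈ Ioo (-r) r ∧ x₀ + t • (ν : EuclideanSpace ℝ (Fin 3)) ∈ S}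
        ⊆ {t : ℝ | t ∈ Ioo 0 r ∧ x₀ + t • (ν : EuclideanSpace ℝ (Fin 3)) ∈ S}
          ∪ (Neg.neg ⁻¹' {t : ℝ | t ∈ Ioo 0 r ∧
              x₀ + t • (-(ν : EuclideanSpace ℝ (Fin 3))) ∈ S} ∪ {0}) := by
      rintro t ⟨⟨htl, htr⟩, hmem⟩
      rcases lt_trichotomy t 0 with h | h | h
      · refine Or.inr (Or.inl ?_)
        simp only [Set.mem_preimage, Set.mem_setOf_eq, Set.mem_Ioo]
        refine ⟨⟨by linarith, by linarith⟩, ?_⟩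
        rw [smul_neg, ← neg_smul, neg_neg]
        exact hmem
      · exact Or.inr (Or.inr (by simp [h]))
      · exact Or.inl ⟨⟨h, htr⟩, hmem⟩
    have hmle : volume {t : ℝ | t ∈ Ioo (-r) r ∧
          x₀ + t • (ν : EuclideanSpace ℝ (Fin 3)) ∈ S}
        ≤ ENNReal.ofReal a + ENNReal.ofReal b := by
      calc volume {t : ℝ | t ∈ Ioo (-r) r ∧ x₀ + t • (ν : EuclideanSpace ℝ (Fin 3)) ∈ S}
          ≤ volume {t : ℝ | t ∈ Ioo 0 r ∧ x₀ + t • (ν : EuclideanSpace ℝ (Fin 3)) ∈ S}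
            + (volume (Neg.neg ⁻¹' {t : ℝ | t ∈ Ioo 0 r ∧
                x₀ + t • (-(ν : EuclideanSpace ℝ (Fin 3))) ∈ S})
              + volume ({0} : Set ℝ)) :=
            le_trans (measure_mono hcover) (le_trans (measure_union_le _ _)
              (add_le_add le_rfl (measure_union_le _ _)))
        _ = ENNReal.ofReal a + ENNReal.ofReal b := by
            rw [Real.volume_singleton, add_zero, neg_preimage, Measure.measure_neg,
              ha, hb, ENNReal.ofReal_toReal hA₁f, ENNReal.ofReal_toReal hA₂f]
    have hcab : c < a + b := by
      have h1 : ENNReal.ofReal c < ENNReal.ofReal a + ENNReal.ofReal b :=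
        lt_of_lt_of_le (hcon _ hw) hmle
      rw [← ENNReal.ofReal_add ha0 hb0] at h1
      exact (ENNReal.ofReal_lt_ofReal_iff_of_nonneg hc0.le).1 h1
    have hg1 : ENNReal.ofReal (a ^ 3 / 3) ≤ g ν := by
      simp only [hg]
      rw [hval ν]
      exact lintegral_sq_lower _ hA₁m (fun t ht => ht.1.1) hA₁f
    have hg2 : ENNReal.ofReal (b ^ 3 / 3) ≤ g (negSphere ν) := by
      simp only [hg]
      rw [hval (negSphere ν)]
      exact lintegral_sq_lower _ hA₂m (fun t ht => ht.1.1) hA₂f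
    have hsum : ENNReal.ofReal (a ^ 3 / 3 + b ^ 3 / 3) ≤ g ν + g (negSphere ν) := by
      rw [ENNReal.ofReal_add (by positivity) (by positivity)]
      exact add_le_add hg1 hg2
    refine lt_of_lt_of_le ?_ hsum
    rw [hK]
    have hcube : c ^ 3 < (a + b) ^ 3 :=
      pow_lt_pow_left₀ hcab hc0.le (by norm_num)
    have hconv : (a + b) ^ 3 ≤ 4 * (a ^ 3 + b ^ 3) := by
      nlinarith [mul_nonneg (add_nonneg ha0 hb0) (sq_nonneg (a - b))]
    have hrhs : c ^ 3 / 12 < a ^ 3 / 3 + b ^ 3 / 3 := by nlinarith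
    have hpos : 0 < a ^ 3 / 3 + b ^ 3 / 3 := lt_trans (by positivity) hrhs
    exact (ENNReal.ofReal_lt_ofReal_iff hpos).2 hrhs
  -- measurability of g
  have hAmeas : MeasurableSet {p : sphere (0 : EuclideanSpace ℝ (Fin 3)) 1 × Ioi (0:ℝ) |
      (p.2 : ℝ) • (p.1 : EuclideanSpace ℝ (Fin 3)) ∈ U} := by
    have hcont : Continuous fun p : sphere (0 : EuclideanSpace ℝ (Fin 3)) 1 × Ioi (0:ℝ) =>
      (p.2 : ℝ) • (p.1 : EuclideanSpace ℝ (Fin 3)) := by fun_prop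
    exact hcont.measurable hUmeas
  have hgmeas : Measurable g := by
    have h := measurable_measure_prodMk_left (ν := Measure.volumeIoiPow 2) hAmeas
    exact h
  -- total integral computations
  have hneg : ∫⁻ ν, g (negSphere ν) ∂(volume : Measure (EuclideanSpace ℝ (Fin 3))).toSphere
      = ∫⁻ ν, g ν ∂(volume : Measure (EuclideanSpace ℝ (Fin 3))).toSphere := by
    conv_rhs => rw [← map_negSphere_toSphere (volume : Measure (EuclideanSpace ℝ (Fin 3)))]
    rw [lintegral_map hgmeas continuous_negSphere.measurable]
  have hGtot : ∫⁻ ν, (g ν + g (negSphere ν))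
        ∂(volume : Measure (EuclideanSpace ℝ (Fin 3))).toSphere = 2 * volume U := by
    rw [lintegral_add_left hgmeas, hneg, ← htot, two_mul]
  have hσuniv : (volume : Measure (EuclideanSpace ℝ (Fin 3))).toSphere univ
      = ENNReal.ofReal (4 * Real.pi) := by
    rw [Measure.toSphere_apply_univ, volume_unit_ball_three, finrank_euclideanSpace]
    rw [show ((Fintype.card (Fin 3) : ℕ) : ℝ≥0∞) = ENNReal.ofReal 3 by
      simp [Fintype.card_fin]]
    rw [← ENNReal.ofReal_mul (by norm_num)]
    congr 1
    ring
  have hKfin : ∫⁻ _ : sphere (0 : EuclideanSpace ℝ (Fin 3)) 1,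
      K ∂(volume : Measure (EuclideanSpace ℝ (Fin 3))).toSphere ≠ ⊤ := by
    rw [lintegral_const, hσuniv]
    exact ENNReal.mul_ne_top ENNReal.ofReal_ne_top ENNReal.ofReal_ne_top
  have hle : ∫⁻ ν, (g ν + g (negSphere ν))
        ∂(volume : Measure (EuclideanSpace ℝ (Fin 3))).toSphere
      ≤ ∫⁻ _, K ∂(volume : Measure (EuclideanSpace ℝ (Fin 3))).toSphere := by
    rw [hGtot, lintegral_const, hσuniv, hK, hUvol]
    calc 2 * volume (S ∩ ball x₀ r)
        ≤ 2 * ENNReal.ofReal (δ * ((4 / 3) * Real.pi * r ^ 3)) := by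
          exact mul_le_mul_right hsparse3 2
      _ = ENNReal.ofReal (c ^ 3 / 12) * ENNReal.ofReal (4 * Real.pi) := by
          rw [show (2 : ℝ≥0∞) = ENNReal.ofReal 2 by norm_num,
            ← ENNReal.ofReal_mul (by norm_num), ← ENNReal.ofReal_mul (by positivity)]
          congr 1
          rw [hc3]
          ring
  have hGaemeas : AEMeasurable (fun ν => g ν + g (negSphere ν))
      (volume : Measure (EuclideanSpace ℝ (Fin 3))).toSphere :=
    (hgmeas.add (hgmeas.comp continuous_negSphere.measurable)).aemeasurable
  have heq := ae_eq_of_ae_le_of_lintegral_le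
    (ae_of_all _ (fun ν => (hstrict ν).le)) hKfin hGaemeas hle
  have hσne : (volume : Measure (EuclideanSpace ℝ (Fin 3))).toSphere ≠ 0 := by
    intro h0
    rw [h0] at hσuniv
    simp only [Measure.coe_zero, Pi.zero_apply] at hσuniv
    have h4π : 0 < 4 * Real.pi := by positivity
    rw [eq_comm, ENNReal.ofReal_eq_zero] at hσuniv
    linarith
  haveI := ae_neBot.2 hσne
  obtain ⟨ν, hν⟩ := heq.exists
  exact absurd hν (hstrict ν).ne
end

section
/- There exists a constant C > 0 (depending only on the dimension 3) with the following property. Let φ : (0, 1/2) → (0,∞) be nondecreasing, let f ∈ L¹(ℝ³), and let K ≥ 0 be such that Ω(f, I(x,r)) ≤ K·φ(r) for every x ∈ ℝ³ and every 0 < r < 1/2. Then for every x ∈ ℝ³ and all 0 < r' ≤ r < 1/2, the cube averages satisfy |f_{I(x,r')} − f_{I(x,r)}| ≤ C·K·( φ(r) + ∫_{r'}^{r} φ(s)/s ds ). -/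
open MeasureTheory Set

/-- The open cube in `ℝ³` centered at `x` with side length `r`. -/
def cube (x : EuclideanSpace ℝ (Fin 3)) (r : ℝ) : Set (EuclideanSpace ℝ (Fin 3)) :=
  {y | ∀ i : Fin 3, |y i - x i| < r / 2}

lemma cube_eq (x : EuclideanSpace ℝ (Fin 3)) (r : ℝ) :
    cube x r = ((MeasurableEquiv.toLp 2 (Fin 3 → ℝ)).symm) ⁻¹'
      (Set.univ.pi fun i => Ioo (x i - r / 2) (x i + r / 2)) := by
  ext y
  have he : ∀ (z : EuclideanSpace ℝ (Fin 3)) (i : Fin 3),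
      ((MeasurableEquiv.toLp 2 (Fin 3 → ℝ)).symm) z i = z i := fun _ _ => rfl
  simp only [cube, mem_preimage, mem_pi, mem_univ, forall_true_left, mem_Ioo, mem_setOf_eq,
    abs_sub_lt_iff, he]
  constructor
  · intro h i; constructor <;> linarith [(h i).1, (h i).2]
  · intro h i; constructor <;> linarith [(h i).1, (h i).2]

lemma measurableSet_cube (x : EuclideanSpace ℝ (Fin 3)) (r : ℝ) :
    MeasurableSet (cube x r) := by
  rw [cube_eq]
  exact ((MeasurableEquiv.toLp 2 (Fin 3 → ℝ)).symm).measurable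
    (MeasurableSet.univ_pi fun i => measurableSet_Ioo)

lemma volume_cube (x : EuclideanSpace ℝ (Fin 3)) {r : ℝ} (hr : 0 ≤ r) :
    volume (cube x r) = ENNReal.ofReal (r ^ 3) := by
  rw [cube_eq,
    (EuclideanSpace.volume_preserving_symm_measurableEquiv_toLp (Fin 3)).measure_preimage
      ((MeasurableSet.univ_pi fun i => measurableSet_Ioo).nullMeasurableSet)]
  rw [volume_pi_pi]
  simp only [Real.volume_Ioo]
  have : ∀ i : Fin 3, x i + r / 2 - (x i - r / 2) = r := fun i => by ring
  simp only [this]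
  rw [Finset.prod_const, ← ENNReal.ofReal_pow hr]
  norm_num

/-- The mean value `f_{I(x,r)}` of `f` over the cube `I(x,r)` (of volume `r³`). -/
noncomputable def cubeAvg (f : EuclideanSpace ℝ (Fin 3) → ℝ)
    (x : EuclideanSpace ℝ (Fin 3)) (r : ℝ) : ℝ :=
  (r ^ 3)⁻¹ * ∫ y in cube x r, f y

/-- The mean oscillation `Ω(f, I(x,r))` of `f` over the cube `I(x,r)`. -/
noncomputable def meanOsc (f : EuclideanSpace ℝ (Fin 3) → ℝ)
    (x : EuclideanSpace ℝ (Fin 3)) (r : ℝ) : ℝ :=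
  (r ^ 3)⁻¹ * ∫ y in cube x r, |f y - cubeAvg f x r|

lemma cube_subset (x : EuclideanSpace ℝ (Fin 3)) {a b : ℝ} (hab : a ≤ b) :
    cube x a ⊆ cube x b := fun y hy i => lt_of_lt_of_le (hy i) (by linarith)

lemma volume_cube_lt_top (x : EuclideanSpace ℝ (Fin 3)) {r : ℝ} (hr : 0 ≤ r) :
    volume (cube x r) < ⊤ := by
  rw [volume_cube x hr]; exact ENNReal.ofReal_lt_top

lemma avg_sub_avg_le {f : EuclideanSpace ℝ (Fin 3) → ℝ} (hf : Integrable f volume)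
    (x : EuclideanSpace ℝ (Fin 3)) {a b : ℝ} (ha : 0 < a) (hab : a ≤ b) :
    |cubeAvg f x a - cubeAvg f x b| ≤ (b / a) ^ 3 * meanOsc f x b := by
  have hb : 0 < b := ha.trans_le hab
  have ha3 : (0:ℝ) < a ^ 3 := by positivity
  have hb3 : (0:ℝ) < b ^ 3 := by positivity
  have hva : (volume (cube x a)).toReal = a ^ 3 := by
    rw [volume_cube x ha.le, ENNReal.toReal_ofReal ha3.le]
  set c := cubeAvg f x b with hc
  have hconst : IntegrableOn (fun _ => c) (cube x a) volume := by
    refine integrableOn_const (volume_cube_lt_top x ha.le).ne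
  have hfa : IntegrableOn f (cube x a) volume := hf.integrableOn
  have hfb : IntegrableOn (fun y => f y - c) (cube x b) volume :=
    (hf.integrableOn).sub (integrableOn_const (volume_cube_lt_top x hb.le).ne)
  have key : cubeAvg f x a - c = (a ^ 3)⁻¹ * ∫ y in cube x a, (f y - c) := by
    rw [integral_sub hfa hconst, setIntegral_const, measureReal_def, hva, smul_eq_mul, cubeAvg]
    field_simp
  rw [key, abs_mul, abs_of_nonneg (inv_nonneg.2 ha3.le)]
  have h1 : |∫ y in cube x a, (f y - c)| ≤ ∫ y in cube x a, |f y - c| := by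
    simpa [Real.norm_eq_abs] using
      norm_integral_le_integral_norm (μ := volume.restrict (cube x a)) (fun y => f y - c)
  have h2 : (∫ y in cube x a, |f y - c|) ≤ ∫ y in cube x b, |f y - c| := by
    refine setIntegral_mono_set hfb.abs ?_ (HasSubset.Subset.eventuallyLE (cube_subset x hab))
    exact Filter.Eventually.of_forall fun y => abs_nonneg _
  have h3 : (∫ y in cube x b, |f y - c|) = b ^ 3 * meanOsc f x b := by
    rw [meanOsc, ← hc]; field_simp
  calc (a ^ 3)⁻¹ * |∫ y in cube x a, (f y - c)|
      ≤ (a ^ 3)⁻¹ * ∫ y in cube x b, |f y - c| := by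
        exact mul_le_mul_of_nonneg_left (h1.trans h2) (inv_nonneg.2 ha3.le)
    _ = (b / a) ^ 3 * meanOsc f x b := by rw [h3]; field_simp

section PhiLemmas

variable {φ : ℝ → ℝ}

lemma phi_integrableOn
    (hmono : ∀ a b : ℝ, 0 < a → a ≤ b → b < 1 / 2 → φ a ≤ φ b)
    {a b : ℝ} (ha : 0 < a) (hab : a ≤ b) (hb : b < 1 / 2) :
    IntegrableOn (fun s => φ s / s) (Ioc a b) volume := by
  have hm : MonotoneOn φ (Icc a b) := fun u hu v hv huv =>
    hmono u v (lt_of_lt_of_le ha hu.1) huv (lt_of_le_of_lt hv.2 hb)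
  have hφi : IntegrableOn φ (Icc a b) volume := hm.integrableOn_isCompact isCompact_Icc
  have hcont : ContinuousOn (fun s : ℝ => s⁻¹) (Icc a b) :=
    ContinuousOn.inv₀ continuousOn_id fun s hs => ne_of_gt (lt_of_lt_of_le ha hs.1)
  have : IntegrableOn (fun s => φ s * s⁻¹) (Icc a b) volume :=
    hφi.mul_continuousOn hcont isCompact_Icc
  simpa [div_eq_mul_inv] using this.mono_set Ioc_subset_Icc_self

lemma phi_log_le
    (hpos : ∀ t : ℝ, 0 < t → t < 1 / 2 → 0 < φ t)
    (hmono : ∀ a b : ℝ, 0 < a → a ≤ b → b < 1 / 2 → φ a ≤ φ b)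
    {a : ℝ} (ha : 0 < a) (h2a : 2 * a < 1 / 2) :
    φ a * Real.log 2 ≤ ∫ s in Ioc a (2 * a), φ s / s := by
  have hle : a ≤ 2 * a := by linarith
  have hci : IntegrableOn (fun s : ℝ => φ a / s) (Ioc a (2 * a)) volume := by
    have : ContinuousOn (fun s : ℝ => φ a / s) (Icc a (2 * a)) :=
      ContinuousOn.div continuousOn_const continuousOn_id
        fun s hs => ne_of_gt (lt_of_lt_of_le ha hs.1)
    exact (this.integrableOn_Icc).mono_set Ioc_subset_Icc_self
  have hmon' : (∫ s in Ioc a (2 * a), φ a / s) ≤ ∫ s in Ioc a (2 * a), φ s / s := by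
    refine setIntegral_mono_on hci (phi_integrableOn hmono ha hle h2a) measurableSet_Ioc ?_
    intro s hs
    have hs0 : 0 < s := lt_trans ha hs.1
    have hφ : φ a ≤ φ s := hmono a s ha hs.1.le (lt_of_le_of_lt hs.2 h2a)
    gcongr
  refine le_trans (le_of_eq ?_) hmon'
  rw [← intervalIntegral.integral_of_le hle]
  simp only [div_eq_mul_inv]
  rw [intervalIntegral.integral_const_mul, integral_inv_of_pos ha (by linarith)]
  congr 1
  rw [mul_div_assoc, div_self (ne_of_gt ha), mul_one]

end PhiLemmas

/-- **Telescoping estimate on cube averages (Spanne-type).** There is a dimensional constant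
`C > 0` such that whenever `φ : (0,1/2) → (0,∞)` is nondecreasing, `f ∈ L¹(ℝ³)` and
`Ω(f, I(x,r)) ≤ K·φ(r)` for all `x` and all `0 < r < 1/2`, then for all `0 < r' ≤ r < 1/2`,
`|f_{I(x,r')} − f_{I(x,r)}| ≤ C·K·(φ(r) + ∫_{r'}^{r} φ(s)/s ds)`. -/
theorem cube_average_telescoping :
    ∃ C : ℝ, 0 < C ∧
      ∀ (φ : ℝ → ℝ) (f : EuclideanSpace ℝ (Fin 3) → ℝ) (K : ℝ),
        (∀ t : ℝ, 0 < t → t < 1 / 2 → 0 < φ t) →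
        (∀ a b : ℝ, 0 < a → a ≤ b → b < 1 / 2 → φ a ≤ φ b) →
        Integrable f volume → 0 ≤ K →
        (∀ (x : EuclideanSpace ℝ (Fin 3)) (r : ℝ), 0 < r → r < 1 / 2 →
          meanOsc f x r ≤ K * φ r) →
        ∀ (x : EuclideanSpace ℝ (Fin 3)) (r' r : ℝ), 0 < r' → r' ≤ r → r < 1 / 2 →
          |cubeAvg f x r' - cubeAvg f x r| ≤
            C * K * (φ r + ∫ s in Set.Ioc r' r, φ s / s) := by
  refine ⟨12, by norm_num, ?_⟩
  intro φ f K hpos hmono hf hK hosc x r' r hr' hr'r hr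
  -- direct step estimate
  have step : ∀ a b : ℝ, 0 < a → a ≤ b → b ≤ 2 * a → b < 1 / 2 →
      |cubeAvg f x a - cubeAvg f x b| ≤ 8 * (K * φ b) := by
    intro a b ha hab hb2 hb
    have hb0 : 0 < b := ha.trans_le hab
    have h1 : |cubeAvg f x a - cubeAvg f x b| ≤ (b / a) ^ 3 * meanOsc f x b :=
      avg_sub_avg_le hf x ha hab
    have h2 : meanOsc f x b ≤ K * φ b := hosc x b hb0 hb
    have h3 : (b / a) ^ 3 ≤ 8 := by
      have hba : b / a ≤ 2 := (div_le_iff₀ ha).2 (by linarith)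
      have hba0 : 0 ≤ b / a := div_nonneg hb0.le ha.le
      have := pow_le_pow_left₀ hba0 hba 3
      norm_num at this
      exact this
    have h4 : 0 ≤ K * φ b := mul_nonneg hK (hpos b hb0 hb).le
    have h5 : 0 ≤ meanOsc f x b ∨ True := Or.inr trivial
    calc |cubeAvg f x a - cubeAvg f x b| ≤ (b / a) ^ 3 * meanOsc f x b := h1
      _ ≤ (b / a) ^ 3 * (K * φ b) := by
          refine mul_le_mul_of_nonneg_left h2 (by positivity)
      _ ≤ 8 * (K * φ b) := mul_le_mul_of_nonneg_right h3 h4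
  have intnonneg : ∀ a b : ℝ, 0 < a → b < 1 / 2 → (0:ℝ) ≤ ∫ s in Set.Ioc a b, φ s / s := by
    intro a b ha hb
    refine setIntegral_nonneg measurableSet_Ioc fun s hs => ?_
    have hs0 : 0 < s := lt_trans ha hs.1
    exact div_nonneg (hpos s hs0 (lt_of_le_of_lt hs.2 hb)).le hs0.le
  have main : ∀ n : ℕ, ∀ ρ : ℝ, r' ≤ ρ → ρ < 1 / 2 → ρ ≤ 2 ^ n * r' →
      |cubeAvg f x r' - cubeAvg f x ρ| ≤
        8 * (K * φ ρ) + 12 * (K * ∫ s in Set.Ioc r' ρ, φ s / s) := by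
    intro n
    induction n with
    | zero =>
      intro ρ h1 h2 h3
      have hρ : ρ = r' := le_antisymm (by simpa using h3) h1
      rw [hρ, sub_self, abs_zero, Set.Ioc_self]
      have hzero : (∫ s in (∅ : Set ℝ), φ s / s) = 0 := by simp
      rw [hzero, mul_zero]
      have := mul_nonneg hK (hpos r' hr' (hρ ▸ h2)).le
      linarith
    | succ n ih =>
      intro ρ h1 h2 h3
      have hρ0 : 0 < ρ := hr'.trans_le h1
      by_cases hcase : ρ ≤ 2 * r'
      · have hstep := step r' ρ hr' h1 hcase h2
        have hint := intnonneg r' ρ hr' h2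
        have := mul_nonneg hK hint
        linarith
      · push_neg at hcase
        set σ := ρ / 2 with hσ
        have hσ0 : 0 < σ := by positivity
        have hσr' : r' ≤ σ := by simp only [hσ]; linarith
        have hσ2 : σ < 1 / 2 := by simp only [hσ]; linarith
        have hσn : σ ≤ 2 ^ n * r' := by
          rw [pow_succ] at h3
          simp only [hσ]; linarith
        have hIH := ih σ hσr' hσ2 hσn
        have hstep : |cubeAvg f x σ - cubeAvg f x ρ| ≤ 8 * (K * φ ρ) :=
          step σ ρ hσ0 (by simp only [hσ]; linarith) (by simp only [hσ]; linarith) h2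
        have hbridge : 8 * (K * φ σ) ≤ 12 * (K * ∫ s in Set.Ioc σ ρ, φ s / s) := by
          have hlog : φ σ * Real.log 2 ≤ ∫ s in Set.Ioc σ (2 * σ), φ s / s :=
            phi_log_le hpos hmono hσ0 (by simp only [hσ]; linarith)
          have h2σ : 2 * σ = ρ := by simp only [hσ]; ring
          rw [h2σ] at hlog
          have hlog2 : (0.6931471803 : ℝ) < Real.log 2 := Real.log_two_gt_d9
          have hφσ : 0 < φ σ := hpos σ hσ0 hσ2
          nlinarith [mul_le_mul_of_nonneg_left hlog hK, mul_nonneg hK hφσ.le]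
        have hsplit : (∫ s in Set.Ioc r' ρ, φ s / s) =
            (∫ s in Set.Ioc r' σ, φ s / s) + ∫ s in Set.Ioc σ ρ, φ s / s := by
          rw [← setIntegral_union (Set.Ioc_disjoint_Ioc_of_le le_rfl) measurableSet_Ioc
            (phi_integrableOn hmono hr' hσr' hσ2)
            (phi_integrableOn hmono hσ0 (by simp only [hσ]; linarith) h2),
            Set.Ioc_union_Ioc_eq_Ioc hσr' (by simp only [hσ]; linarith)]
        have htri : |cubeAvg f x r' - cubeAvg f x ρ| ≤
            |cubeAvg f x r' - cubeAvg f x σ| + |cubeAvg f x σ - cubeAvg f x ρ| :=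
          abs_sub_le _ _ _
        rw [hsplit]
        have hKadd : K * ((∫ s in Set.Ioc r' σ, φ s / s) + ∫ s in Set.Ioc σ ρ, φ s / s) =
            K * (∫ s in Set.Ioc r' σ, φ s / s) + K * ∫ s in Set.Ioc σ ρ, φ s / s :=
          mul_add _ _ _
        linarith
  obtain ⟨n, hn⟩ := pow_unbounded_of_one_lt (r / r') (one_lt_two (α := ℝ))
  have hrn : r ≤ 2 ^ n * r' := by
    rw [div_lt_iff₀ hr'] at hn
    linarith
  have hmain := main n r hr'r hr hrn
  have hφr : 0 < φ r := hpos r (hr'.trans_le hr'r) hr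
  have hint := intnonneg r' r hr' hr
  nlinarith [mul_nonneg hK hφr.le, mul_nonneg hK hint]
end

section
/- Let φ : (0, 1/2) → (0,∞) be nondecreasing with ∫₀^{1/2} φ(s)/s ds < ∞ (Dini condition). Let f ∈ L¹(ℝ³) and K ≥ 0 be such that Ω(f, I(x,r)) ≤ K·φ(r) for every x ∈ ℝ³ and every 0 < r < 1/2. Then there exists a continuous function g : ℝ³ → ℝ such that f = g almost everywhere. In particular, if a weighted bmo space with weight φ satisfying the Dini condition contains f, then f has a continuous representative. -/
open MeasureTheory Set

lemma integral_sub_const (f : EuclideanSpace ℝ (Fin 3) → ℝ) (hf : Integrable f volume)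
    (x : EuclideanSpace ℝ (Fin 3)) {r : ℝ} (hr : 0 < r) (c : ℝ) :
    ∫ y in cube x r, (f y - c) = (∫ y in cube x r, f y) - r ^ 3 * c := by
  rw [integral_sub hf.integrableOn
    (integrableOn_const (volume_cube_lt_top x hr.le).ne)]
  rw [setIntegral_const, measureReal_def, volume_cube x hr.le, smul_eq_mul,
    ENNReal.toReal_ofReal (by positivity)]

lemma avg_sub_avg_abs (f : EuclideanSpace ℝ (Fin 3) → ℝ) (hf : Integrable f volume)
    {x x' : EuclideanSpace ℝ (Fin 3)} {r r' : ℝ} (hr' : 0 < r') (hr : 0 < r)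
    (hsub : cube x' r' ⊆ cube x r) :
    |cubeAvg f x' r' - cubeAvg f x r| ≤ (r ^ 3 / r' ^ 3) * meanOsc f x r := by
  set c := cubeAvg f x r with hc
  have h1 : cubeAvg f x' r' - c = (r' ^ 3)⁻¹ * ∫ y in cube x' r', (f y - c) := by
    rw [integral_sub_const f hf x' hr' c, mul_sub, cubeAvg]
    have h2 : (r' ^ 3)⁻¹ * (r' ^ 3 * c) = c := by field_simp
    rw [h2]
  have habs : |cubeAvg f x' r' - c| ≤ (r' ^ 3)⁻¹ * ∫ y in cube x' r', |f y - c| := by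
    rw [h1, abs_mul, abs_of_nonneg (by positivity : (0:ℝ) ≤ (r' ^ 3)⁻¹)]
    gcongr
    simpa [Real.norm_eq_abs] using
      norm_integral_le_integral_norm (μ := volume.restrict (cube x' r')) (fun y => f y - c)
  refine habs.trans ?_
  have hmono : ∫ y in cube x' r', |f y - c| ≤ ∫ y in cube x r, |f y - c| := by
    apply setIntegral_mono_set
    · exact ((hf.integrableOn.sub (integrableOn_const
        (volume_cube_lt_top x hr.le).ne)).abs)
    · exact Filter.Eventually.of_forall fun y => abs_nonneg _
    · exact Filter.Eventually.of_forall hsub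
  calc (r' ^ 3)⁻¹ * ∫ y in cube x' r', |f y - c|
      ≤ (r' ^ 3)⁻¹ * ∫ y in cube x r, |f y - c| := by gcongr
    _ = (r ^ 3 / r' ^ 3) * meanOsc f x r := by
        rw [meanOsc, ← hc]
        field_simp

noncomputable def rseq (n : ℕ) : ℝ := (2:ℝ)⁻¹ ^ (n + 2)

lemma rseq_pos (n : ℕ) : 0 < rseq n := by unfold rseq; positivity

lemma rseq_succ (n : ℕ) : rseq (n + 1) = rseq n / 2 := by
  unfold rseq; rw [pow_succ]; ring

lemma rseq_lt_half (n : ℕ) : rseq n < 1 / 2 := by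
  unfold rseq
  calc (2:ℝ)⁻¹ ^ (n + 2) ≤ (2:ℝ)⁻¹ ^ 2 := by
        apply pow_le_pow_of_le_one (by norm_num) (by norm_num) (by omega)
    _ < 1 / 2 := by norm_num

lemma rseq_anti : StrictAnti rseq := fun m n h => by
  unfold rseq
  apply pow_lt_pow_right_of_lt_one₀ (by norm_num) (by norm_num) (by omega)

lemma rseq_tendsto : Filter.Tendsto rseq Filter.atTop (nhds 0) := by
  unfold rseq
  have := tendsto_pow_atTop_nhds_zero_of_lt_one (by norm_num : (0:ℝ) ≤ 2⁻¹) (by norm_num)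
  exact this.comp (Filter.tendsto_add_atTop_nat 2)

lemma summable_phi_rseq (φ : ℝ → ℝ)
    (hφpos : ∀ t : ℝ, 0 < t → t < 1 / 2 → 0 < φ t)
    (hφmono : ∀ a b : ℝ, 0 < a → a ≤ b → b < 1 / 2 → φ a ≤ φ b)
    (hDini : (∫⁻ s in Set.Ioo (0 : ℝ) (1 / 2), ENNReal.ofReal (φ s / s)) < ⊤) :
    Summable (fun n => φ (rseq n)) := by
  set A : ℕ → Set ℝ := fun k => Ioo (rseq (k + 1)) (rseq k) with hA
  have hmeas : ∀ k, MeasurableSet (A k) := fun k => measurableSet_Ioo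
  have hdisj : Pairwise (Function.onFun Disjoint A) := by
    intro k l hkl
    rcases hkl.lt_or_gt with h | h
    · exact Set.Ioo_disjoint_Ioo.2 (le_trans (min_le_right _ _)
        (le_max_of_le_left (rseq_anti.antitone (by omega))))
    · exact Set.Ioo_disjoint_Ioo.2 (le_trans (min_le_left _ _)
        (le_max_of_le_right (rseq_anti.antitone (by omega))))
  have hsub : (⋃ k, A k) ⊆ Ioo (0:ℝ) (1/2) := by
    intro s hs
    obtain ⟨k, hk⟩ := Set.mem_iUnion.1 hs
    exact ⟨(rseq_pos (k+1)).trans hk.1, hk.2.trans (rseq_lt_half k)⟩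
  have key : ∀ k : ℕ, ENNReal.ofReal (φ (rseq (k+1)) / 2)
      ≤ ∫⁻ s in A k, ENNReal.ofReal (φ s / s) := by
    intro k
    have hbound : ∀ s ∈ A k, ENNReal.ofReal (φ (rseq (k+1)) / rseq k)
        ≤ ENNReal.ofReal (φ s / s) := by
      intro s hs
      apply ENNReal.ofReal_le_ofReal
      apply div_le_div₀ ((hφpos _ ((rseq_pos (k+1)).trans hs.1) (hs.2.trans (rseq_lt_half k))).le)
        (hφmono _ _ (rseq_pos (k+1)) hs.1.le (hs.2.trans (rseq_lt_half k)))
        ((rseq_pos (k+1)).trans hs.1) hs.2.le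
    have hp' : 0 < φ (rseq (k+1)) := hφpos _ (rseq_pos _) (rseq_lt_half _)
    have hrk := rseq_pos k
    have hvol : volume (A k) = ENNReal.ofReal (rseq k / 2) := by
      rw [hA]; simp only [Real.volume_Ioo, rseq_succ]; congr 1; ring
    have heq : ENNReal.ofReal (φ (rseq (k+1)) / 2)
        = ENNReal.ofReal (φ (rseq (k+1)) / rseq k) * volume (A k) := by
      rw [hvol, ← ENNReal.ofReal_mul (div_nonneg hp'.le hrk.le)]
      congr 1; field_simp
    rw [heq, ← setLIntegral_const]
    apply lintegral_mono_ae
    filter_upwards [ae_restrict_mem (hmeas k)] with s hs using hbound s hs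
  have htsum : (∑' k, ENNReal.ofReal (φ (rseq (k+1)) / 2)) < ⊤ := by
    calc (∑' k, ENNReal.ofReal (φ (rseq (k+1)) / 2))
        ≤ ∑' k, ∫⁻ s in A k, ENNReal.ofReal (φ s / s) := ENNReal.tsum_le_tsum key
      _ = ∫⁻ s in ⋃ k, A k, ENNReal.ofReal (φ s / s) := (lintegral_iUnion hmeas hdisj _).symm
      _ ≤ ∫⁻ s in Set.Ioo (0:ℝ) (1/2), ENNReal.ofReal (φ s / s) := lintegral_mono_set hsub
      _ < ⊤ := hDini
  have hsum1 : Summable (fun k => φ (rseq (k+1)) / 2) := by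
    have := ENNReal.summable_toReal htsum.ne
    refine this.congr fun k => ?_
    rw [ENNReal.toReal_ofReal
      (by exact div_nonneg (hφpos _ (rseq_pos (k+1)) (rseq_lt_half (k+1))).le (by norm_num))]
  have hsum2 : Summable (fun k => φ (rseq (k+1))) := by
    have h2 := hsum1.mul_right 2
    refine h2.congr fun k => ?_
    field_simp
  exact (summable_nat_add_iff (f := fun n => φ (rseq n)) 1).1 hsum2

lemma coord_le_dist (x y : EuclideanSpace ℝ (Fin 3)) (i : Fin 3) : |x i - y i| ≤ dist x y := by
  rw [EuclideanSpace.dist_eq]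
  have h1 : |x i - y i| = Real.sqrt (dist (x i) (y i) ^ 2) := by
    rw [Real.sqrt_sq_eq_abs, Real.dist_eq, abs_abs]
  rw [h1]
  apply Real.sqrt_le_sqrt
  exact Finset.single_le_sum (f := fun j => dist (x j) (y j) ^ 2)
    (fun j _ => sq_nonneg _) (Finset.mem_univ i)

lemma isOpen_cube (x : EuclideanSpace ℝ (Fin 3)) (r : ℝ) : IsOpen (cube x r) := by
  have : cube x r = ⋂ i : Fin 3, {y : EuclideanSpace ℝ (Fin 3) | |y i - x i| < r / 2} := by
    ext y; simp [cube]
  rw [this]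
  exact isOpen_iInter_of_finite fun i =>
    isOpen_lt (((EuclideanSpace.proj i : EuclideanSpace ℝ (Fin 3) →L[ℝ] ℝ).continuous.sub
      continuous_const).abs) continuous_const

lemma cube_subset_closedBall (x : EuclideanSpace ℝ (Fin 3)) {r : ℝ} (hr : 0 ≤ r) :
    cube x r ⊆ Metric.closedBall x r := by
  intro y hy
  rw [Metric.mem_closedBall, EuclideanSpace.dist_eq]
  have hsum : (∑ i : Fin 3, dist (y i) (x i) ^ 2) ≤ r ^ 2 := by
    have hsum1 : (∑ i : Fin 3, dist (y i) (x i) ^ 2) ≤ ∑ _i : Fin 3, (r/2) ^ 2 := by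
      apply Finset.sum_le_sum
      intro i _
      have h1 := (hy i).le
      rw [Real.dist_eq]
      apply sq_le_sq'
      · linarith [abs_nonneg (y i - x i)]
      · exact h1
    refine hsum1.trans ?_
    simp only [Finset.sum_const, Finset.card_univ, Fintype.card_fin, nsmul_eq_mul]
    nlinarith
  calc Real.sqrt (∑ i : Fin 3, dist (y i) (x i) ^ 2) ≤ Real.sqrt (r ^ 2) :=
        Real.sqrt_le_sqrt hsum
    _ = r := Real.sqrt_sq hr

lemma vol_closedBall (x : EuclideanSpace ℝ (Fin 3)) {r : ℝ} (hr : 0 ≤ r) :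
    volume (Metric.closedBall x r)
      = ENNReal.ofReal (r ^ 3) * volume (Metric.ball (0:EuclideanSpace ℝ (Fin 3)) 1) := by
  rw [Measure.addHaar_closedBall _ _ hr]
  congr 2
  simp [finrank_euclideanSpace_fin]

/- ### Main theorem -/

/-- **Dini condition forces continuity in weighted bmo.** If `φ : (0,1/2) → (0,∞)` is
nondecreasing with `∫₀^{1/2} φ(s)/s ds < ∞`, `f ∈ L¹(ℝ³)` and `Ω(f, I(x,r)) ≤ K·φ(r)` for all
`x ∈ ℝ³`, `0 < r < 1/2`, then `f` agrees almost everywhere with a continuous function. -/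
theorem dini_implies_continuous_representative
    (φ : ℝ → ℝ)
    (hφpos : ∀ t : ℝ, 0 < t → t < 1 / 2 → 0 < φ t)
    (hφmono : ∀ a b : ℝ, 0 < a → a ≤ b → b < 1 / 2 → φ a ≤ φ b)
    (hDini : (∫⁻ s in Set.Ioo (0 : ℝ) (1 / 2), ENNReal.ofReal (φ s / s)) < ⊤)
    (f : EuclideanSpace ℝ (Fin 3) → ℝ) (hf : Integrable f volume)
    (K : ℝ) (hK : 0 ≤ K)
    (hosc : ∀ (x : EuclideanSpace ℝ (Fin 3)) (r : ℝ), 0 < r → r < 1 / 2 →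
      meanOsc f x r ≤ K * φ r) :
    ∃ g : EuclideanSpace ℝ (Fin 3) → ℝ, Continuous g ∧ f =ᵐ[volume] g := by
  classical
  set d : ℕ → ℝ := fun n => 8 * (K * φ (rseq n)) with hd
  have hsummable : Summable d := (summable_phi_rseq φ hφpos hφmono hDini).mul_left K |>.mul_left 8
  have hratio : ∀ n : ℕ, rseq n ^ 3 / rseq (n+1) ^ 3 = 8 := by
    intro n
    rw [rseq_succ]
    have h := (rseq_pos n).ne'
    field_simp
    ring
  have hosc' : ∀ (x : EuclideanSpace ℝ (Fin 3)) (n : ℕ),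
      meanOsc f x (rseq n) ≤ K * φ (rseq n) :=
    fun x n => hosc x _ (rseq_pos n) (rseq_lt_half n)
  have hosc_nonneg : ∀ (x : EuclideanSpace ℝ (Fin 3)) (n : ℕ), 0 ≤ meanOsc f x (rseq n) := by
    intro x n
    rw [meanOsc]
    apply mul_nonneg (inv_nonneg.2 (pow_nonneg (rseq_pos n).le 3))
    apply setIntegral_nonneg (isOpen_cube x _).measurableSet fun y _ => abs_nonneg _
  -- key oscillation estimate
  have hkey : ∀ (x x' : EuclideanSpace ℝ (Fin 3)) (n : ℕ),
      cube x' (rseq (n+1)) ⊆ cube x (rseq n) →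
      |cubeAvg f x' (rseq (n+1)) - cubeAvg f x (rseq n)| ≤ d n := by
    intro x x' n hsub
    calc |cubeAvg f x' (rseq (n+1)) - cubeAvg f x (rseq n)|
        ≤ (rseq n ^ 3 / rseq (n+1) ^ 3) * meanOsc f x (rseq n) :=
          avg_sub_avg_abs f hf (rseq_pos _) (rseq_pos _) hsub
      _ = 8 * meanOsc f x (rseq n) := by rw [hratio]
      _ ≤ 8 * (K * φ (rseq n)) := by
          have := hosc' x n
          linarith
  have hstep : ∀ (x : EuclideanSpace ℝ (Fin 3)) (n : ℕ),
      dist (cubeAvg f x (rseq n)) (cubeAvg f x (rseq (n+1))) ≤ d n := by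
    intro x n
    rw [Real.dist_eq, abs_sub_comm]
    apply hkey x x n
    intro y hy i
    exact lt_of_lt_of_le (hy i) (by linarith [rseq_succ n, rseq_pos (n+1)])
  have hcauchy : ∀ x : EuclideanSpace ℝ (Fin 3),
      ∃ L : ℝ, Filter.Tendsto (fun n => cubeAvg f x (rseq n)) Filter.atTop (nhds L) :=
    fun x => cauchySeq_tendsto_of_complete
      (cauchySeq_of_dist_le_of_summable d (hstep x) hsummable)
  choose g hg using hcauchy
  have hdistg : ∀ (x : EuclideanSpace ℝ (Fin 3)) (n : ℕ),
      dist (cubeAvg f x (rseq n)) (g x) ≤ ∑' m, d (n + m) :=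
    fun x n => dist_le_tsum_of_dist_le_of_tendsto d (hstep x) hsummable (hg x) n
  set T : ℕ → ℝ := fun n => ∑' m, d (n + m) with hT
  have hTeq : ∀ n, T n = (∑' m, d m) - ∑ i ∈ Finset.range n, d i := by
    intro n
    have h1 := Summable.sum_add_tsum_nat_add (f := d) n hsummable
    have h2 : (∑' m, d (n + m)) = ∑' m, d (m + n) := tsum_congr fun m => by rw [add_comm]
    rw [hT]
    simp only [h2]
    linarith [h1]
  have hT_tendsto : Filter.Tendsto T Filter.atTop (nhds 0) := by
    have h3 : Filter.Tendsto (fun n => (∑' m, d m) - ∑ i ∈ Finset.range n, d i)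
        Filter.atTop (nhds ((∑' m, d m) - (∑' m, d m))) :=
      Filter.Tendsto.sub tendsto_const_nhds hsummable.hasSum.tendsto_sum_nat
    rw [sub_self] at h3
    exact h3.congr fun n => (hTeq n).symm
  have hd_tendsto : Filter.Tendsto d Filter.atTop (nhds 0) := hsummable.tendsto_atTop_zero
  refine ⟨g, ?_, ?_⟩
  · -- continuity of g
    rw [Metric.continuous_iff]
    intro b ε hε
    have hcomb : Filter.Tendsto (fun n => T (n+1) + d n + T n) Filter.atTop (nhds 0) := by
      have := ((hT_tendsto.comp (Filter.tendsto_add_atTop_nat 1)).add hd_tendsto).add hT_tendsto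
      simpa using this
    obtain ⟨n, hn⟩ := (hcomb.eventually (gt_mem_nhds hε)).exists
    refine ⟨rseq (n+1) / 2, by linarith [rseq_pos (n+1)], fun a hab => ?_⟩
    have hsub : cube a (rseq (n+1)) ⊆ cube b (rseq n) := by
      intro y hy i
      have h1 : |a i - b i| ≤ dist a b := coord_le_dist a b i
      have h2 := hy i
      have h3 : rseq n = 2 * rseq (n+1) := by rw [rseq_succ]; ring
      calc |y i - b i| ≤ |y i - a i| + |a i - b i| := abs_sub_le _ _ _
        _ < rseq (n+1) / 2 + rseq (n+1) / 2 := by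
            apply add_lt_add h2 (lt_of_le_of_lt h1 hab)
        _ = rseq n / 2 := by linarith
    have hmid : dist (cubeAvg f a (rseq (n+1))) (cubeAvg f b (rseq n)) ≤ d n := by
      rw [Real.dist_eq]
      exact hkey b a n hsub
    calc dist (g a) (g b)
        ≤ dist (g a) (cubeAvg f a (rseq (n+1)))
          + dist (cubeAvg f a (rseq (n+1))) (cubeAvg f b (rseq n))
          + dist (cubeAvg f b (rseq n)) (g b) := dist_triangle4 _ _ _ _
      _ ≤ T (n+1) + d n + T n := by
          refine add_le_add (add_le_add ?_ hmid) (hdistg b n)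
          rw [dist_comm]
          exact hdistg a (n+1)
      _ < ε := hn
  · -- f = g almost everywhere
    have hae := IsUnifLocDoublingMeasure.ae_tendsto_average_norm_sub
      (μ := (volume : Measure (EuclideanSpace ℝ (Fin 3)))) hf.locallyIntegrable 1
    filter_upwards [hae] with x hx
    have hδ : Filter.Tendsto rseq Filter.atTop (nhdsWithin 0 (Set.Ioi 0)) := by
      rw [tendsto_nhdsWithin_iff]
      exact ⟨rseq_tendsto, Filter.Eventually.of_forall fun n => rseq_pos n⟩
    have hmem : ∀ᶠ j in Filter.atTop, x ∈ Metric.closedBall x (1 * rseq j) :=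
      Filter.Eventually.of_forall fun j => by
        simp [Metric.mem_closedBall, (rseq_pos j).le]
    have h0 : Filter.Tendsto (fun j => ⨍ y in Metric.closedBall x (rseq j), ‖f y - f x‖)
        Filter.atTop (nhds 0) := hx (fun _ => x) rseq hδ hmem
    set C := (volume (Metric.ball (0:EuclideanSpace ℝ (Fin 3)) 1)).toReal with hC
    have hbd : ∀ j : ℕ, |cubeAvg f x (rseq j) - f x|
        ≤ C * ⨍ y in Metric.closedBall x (rseq j), ‖f y - f x‖ := by
      intro j
      set r := rseq j with hr
      have hrpos := rseq_pos j
      set B := Metric.closedBall x r with hB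
      have hBvol : volume B = ENNReal.ofReal (r ^ 3)
          * volume (Metric.ball (0:EuclideanSpace ℝ (Fin 3)) 1) := vol_closedBall x hrpos.le
      have hBfin : volume B < ⊤ := measure_closedBall_lt_top
      have hintB : IntegrableOn (fun y => |f y - f x|) B volume :=
        ((hf.integrableOn.sub (integrableOn_const hBfin.ne)).abs)
      have h1 : cubeAvg f x r - f x = (r ^ 3)⁻¹ * ∫ y in cube x r, (f y - f x) := by
        rw [integral_sub_const f hf x hrpos (f x), mul_sub, cubeAvg]
        have h2 : (r ^ 3)⁻¹ * (r ^ 3 * f x) = f x := by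
          rw [← mul_assoc, inv_mul_cancel₀ (pow_pos hrpos 3).ne', one_mul]
        rw [h2]
      have h2 : |cubeAvg f x r - f x| ≤ (r ^ 3)⁻¹ * ∫ y in cube x r, |f y - f x| := by
        rw [h1, abs_mul, abs_of_nonneg (by positivity : (0:ℝ) ≤ (r ^ 3)⁻¹)]
        gcongr
        simpa [Real.norm_eq_abs] using
          norm_integral_le_integral_norm (μ := volume.restrict (cube x r))
            (fun y => f y - f x)
      have h3 : ∫ y in cube x r, |f y - f x| ≤ ∫ y in B, |f y - f x| := by
        apply setIntegral_mono_set hintB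
        · exact Filter.Eventually.of_forall fun y => abs_nonneg _
        · exact Filter.Eventually.of_forall (cube_subset_closedBall x hrpos.le)
      have h4 : (∫ y in B, |f y - f x|)
          = (volume B).toReal * ⨍ y in B, ‖f y - f x‖ := by
        rw [setAverage_eq (μ := volume) (fun y => ‖f y - f x‖) B, smul_eq_mul, measureReal_def]
        have hvpos : 0 < (volume B).toReal := by
          apply ENNReal.toReal_pos _ hBfin.ne
          refine (lt_of_lt_of_le (Metric.measure_ball_pos volume x hrpos) ?_).ne'
          exact measure_mono Metric.ball_subset_closedBall
        rw [← mul_assoc, mul_inv_cancel₀ hvpos.ne', one_mul]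
        simp [Real.norm_eq_abs]
      have h5 : (r ^ 3)⁻¹ * (volume B).toReal = C := by
        rw [hBvol, ENNReal.toReal_mul, ENNReal.toReal_ofReal (by positivity), hC]
        field_simp
        exact div_self hrpos.ne'
      calc |cubeAvg f x r - f x|
          ≤ (r ^ 3)⁻¹ * ∫ y in cube x r, |f y - f x| := h2
        _ ≤ (r ^ 3)⁻¹ * ∫ y in B, |f y - f x| := by gcongr
        _ = (r ^ 3)⁻¹ * ((volume B).toReal * ⨍ y in B, ‖f y - f x‖) := by rw [h4]
        _ = C * ⨍ y in B, ‖f y - f x‖ := by rw [← mul_assoc, h5]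
    have htend : Filter.Tendsto (fun j => cubeAvg f x (rseq j)) Filter.atTop (nhds (f x)) := by
      rw [tendsto_iff_dist_tendsto_zero]
      apply squeeze_zero (fun j => dist_nonneg) (fun j => ?_) (by simpa using h0.const_mul C)
      rw [Real.dist_eq]
      exact hbd j
    exact tendsto_nhds_unique htend (hg x)
end
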